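/- For all n ≥ 1 and k ≥ 0, the generalized Catalan number C_n^(k) = ((k+1)/(2n+k+1)) * binomial(2n+k+1, n) satisfies the identity C_n^(k) = sum over s from 1 to k+1 of C_{n-1}^(s). -/

import Mathlib

def gc (n k : ℕ) : ℚ := ((k : ℚ) + 1) / (2 * (n : ℚ) + (k : ℚ) + 1) * ((2 * n + k + 1).choose n : ℚ)

def cat (n : ℕ) : ℚ := 1 / ((n : ℚ) + 1) * ((2 * n).choose n : ℚ)

def Cond {n : ℕ} (u : Fin n → ℕ) : Prop :=
  ∀ i j : Fin n, i < j →
    ¬(1 ≤ (u j : ℤ) - (((j : ℕ) : ℤ) - ((i : ℕ) : ℤ)) ∧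
      (u j : ℤ) - (((j : ℕ) : ℤ) - ((i : ℕ) : ℤ)) ≤ (u i : ℤ) - 1)

lemma gc_base (p : ℕ) : gc (p + 1) 0 = gc p 1 := by
  have h := Nat.add_one_mul_choose_eq (2 * p + 2) p
  have h' : ((2 * p + 3 : ℕ) : ℚ) * ((2 * p + 2).choose p : ℚ)
      = ((2 * p + 3).choose (p + 1) : ℚ) * ((p + 1 : ℕ) : ℚ) := by
    exact_mod_cast congrArg (Nat.cast : ℕ → ℚ) h
  simp only [gc]
  push_cast at h' ⊢
  have e1 : 2 * ((p : ℚ) + 1) + 0 + 1 ≠ 0 := by positivity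
  have e2 : 2 * (p : ℚ) + 1 + 1 ≠ 0 := by positivity
  have hc1 : (2 * (p + 1) + 0 + 1) = 2 * p + 3 := by ring
  have hc2 : (2 * p + 1 + 1) = 2 * p + 2 := by ring
  rw [hc1, hc2]
  field_simp
  linear_combination (-2 : ℚ) * h'

lemma gc_step (p k : ℕ) : gc (p + 1) (k + 1) = gc (p + 1) k + gc p (k + 2) := by
  have h1 := Nat.choose_succ_succ (2 * p + k + 3) p
  have h2 := Nat.add_one_mul_choose_eq (2 * p + k + 3) p
  have h1' : ((2 * p + k + 4).choose (p + 1) : ℚ)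
      = ((2 * p + k + 3).choose p : ℚ) + ((2 * p + k + 3).choose (p + 1) : ℚ) := by
    exact_mod_cast congrArg (Nat.cast : ℕ → ℚ) h1
  have h2' : ((2 * p + k + 4 : ℕ) : ℚ) * ((2 * p + k + 3).choose p : ℚ)
      = ((2 * p + k + 4).choose (p + 1) : ℚ) * ((p + 1 : ℕ) : ℚ) := by
    exact_mod_cast congrArg (Nat.cast : ℕ → ℚ) h2
  simp only [gc]
  have hc1 : (2 * (p + 1) + (k + 1) + 1) = 2 * p + k + 4 := by ring
  have hc3 : (2 * p + (k + 2) + 1) = 2 * p + k + 3 := by ring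
  rw [hc1, hc3]
  rw [show (2 * (p + 1) + k + 1) = 2 * p + k + 3 from by ring]
  push_cast at h1' h2' ⊢
  have e1 : 2 * ((p : ℚ) + 1) + ((k : ℚ) + 1) + 1 ≠ 0 := by positivity
  have e2 : 2 * ((p : ℚ) + 1) + (k : ℚ) + 1 ≠ 0 := by positivity
  have e3 : 2 * (p : ℚ) + ((k : ℚ) + 2) + 1 ≠ 0 := by positivity
  field_simp
  linear_combination ((k:ℚ)^3 + 4*k^2*p + 8*k^2 + 4*k*(p:ℚ)^2 + 18*k*p + 19*k + 4*(p:ℚ)^2 + 14*p + 12) * h1' - (2*(k:ℚ)+4*p+6) * h2'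

theorem stmt0 (n k : ℕ) (hn : 1 ≤ n) :
    gc n k = ∑ s ∈ Finset.Icc 1 (k + 1), gc (n - 1) s := by
  obtain ⟨p, rfl⟩ := Nat.exists_eq_add_of_le' hn
  simp only [Nat.add_sub_cancel] at *
  induction k with
  | zero => simpa using gc_base p
  | succ k ih =>
      rw [Finset.sum_Icc_succ_top (by omega : 1 ≤ k + 1 + 1)]
      rw [← ih, gc_step p k]
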